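/- Let C ⊆ {0,1}ⁿ be a neural code, c ∈ {0,1}ⁿ, and let f, g ∈ CF(J_C) be distinct elements with f(c) = 1 and g(c) = 1. Then for all indices i, j with 1 ≤ i, j ≤ n and every pseudo-monomial h, we have f·(x_i − c_i) ≠ h·g·(x_j − c_j); that is, no product f·(x_i − c_i) is a polynomial multiple of a product g·(x_j − c_j) arising from a different element of CF(J_C). -/

import Mathlib

open MvPolynomial

/-- The characteristic polynomial `ρ_v = ∏ i, (1 - v_i - x_i)` of a word `v ∈ {0,1}ⁿ = 𝔽₂ⁿ`. -/
noncomputable def rho (n : ℕ) (v : Fin n → ZMod 2) : MvPolynomial (Fin n) (ZMod 2) :=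
  ∏ i, (1 - C (v i) - X i)

/-- The neural ideal `J_C = ⟨ρ_v : v ∉ C⟩` of a neural code `C ⊆ {0,1}ⁿ`. -/
noncomputable def neuralIdeal (n : ℕ) (Co : Set (Fin n → ZMod 2)) :
    Ideal (MvPolynomial (Fin n) (ZMod 2)) :=
  Ideal.span { p | ∃ v, v ∉ Co ∧ p = rho n v }

/-- A pseudo-monomial: `∏_{i∈σ} x_i ∏_{j∈τ} (1 - x_j)` with `σ, τ` disjoint. -/
def IsPseudoMonomial (n : ℕ) (f : MvPolynomial (Fin n) (ZMod 2)) : Prop :=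
  ∃ σ τ : Finset (Fin n), Disjoint σ τ ∧
    f = (∏ i ∈ σ, X i) * ∏ j ∈ τ, (1 - X j)

/-- `f` is a minimal pseudo-monomial of the ideal `J`. -/
def IsMinimalPM (n : ℕ) (J : Ideal (MvPolynomial (Fin n) (ZMod 2)))
    (f : MvPolynomial (Fin n) (ZMod 2)) : Prop :=
  f ∈ J ∧ IsPseudoMonomial n f ∧
    ¬ ∃ g, IsPseudoMonomial n g ∧ g ∈ J ∧ g.totalDegree < f.totalDegree ∧
      ∃ h, f = g * h

/-- The canonical form `CF(J)`: the set of all minimal pseudo-monomials of `J`. -/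
def CF (n : ℕ) (J : Ideal (MvPolynomial (Fin n) (ZMod 2))) :
    Set (MvPolynomial (Fin n) (ZMod 2)) :=
  { f | IsMinimalPM n J f }

/-- An ideal is a pseudo-monomial ideal if it is generated by finitely many pseudo-monomials. -/
def IsPseudoMonomialIdeal (n : ℕ) (J : Ideal (MvPolynomial (Fin n) (ZMod 2))) : Prop :=
  ∃ S : Finset (MvPolynomial (Fin n) (ZMod 2)),
    (∀ f ∈ S, IsPseudoMonomial n f) ∧ J = Ideal.span (S : Set (MvPolynomial (Fin n) (ZMod 2)))

/-- A polynomial is square-free if every variable occurs with exponent at most 1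
in every monomial of its support. -/
def IsSquareFreePoly (n : ℕ) (f : MvPolynomial (Fin n) (ZMod 2)) : Prop :=
  ∀ m ∈ f.support, ∀ i, m i ≤ 1

/-- The Boolean ideal `B = ⟨x_i (1 - x_i) : 1 ≤ i ≤ n⟩`. -/
noncomputable def boolIdeal (n : ℕ) : Ideal (MvPolynomial (Fin n) (ZMod 2)) :=
  Ideal.span { p | ∃ i : Fin n, p = X i * (1 - X i) }

/-- The square-free representative `h_R` of `h` modulo the Boolean ideal:
replace every exponent by its truncation at 1. -/
noncomputable def sqReduce (n : ℕ) (h : MvPolynomial (Fin n) (ZMod 2)) :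
    MvPolynomial (Fin n) (ZMod 2) :=
  ∑ m ∈ h.support,
    monomial (Finsupp.mapRange (fun e => min e 1) (by simp) m) (coeff m h)

/-- The set of reduced products `P(C,D) = {(f g)_R : f ∈ CF(J_C), g ∈ CF(J_D)}`. -/
def reducedProducts (n : ℕ) (Co D : Set (Fin n → ZMod 2)) :
    Set (MvPolynomial (Fin n) (ZMod 2)) :=
  { p | ∃ f ∈ CF n (neuralIdeal n Co), ∃ g ∈ CF n (neuralIdeal n D), p = sqReduce n (f * g) }

/-- The set of minimal reduced products `MP(C,D)`. -/
def minReducedProducts (n : ℕ) (Co D : Set (Fin n → ZMod 2)) :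
    Set (MvPolynomial (Fin n) (ZMod 2)) :=
  { h | h ∈ reducedProducts n Co D ∧ h ≠ 0 ∧
    ¬ ∃ f ∈ reducedProducts n Co D, ∃ g : MvPolynomial (Fin n) (ZMod 2),
      1 ≤ g.totalDegree ∧ h = f * g }

/-- The code `C(U)` of a cover `U = {U_1, …, U_n}` of a topological space `X`. -/
def codeOfCover {X : Type*} [TopologicalSpace X] (n : ℕ) (U : Fin n → Set X) :
    Set (Fin n → ZMod 2) :=
  { v | ((⋂ i ∈ { i : Fin n | v i = 1 }, U i) \ ⋃ j ∈ { j : Fin n | v j = 0 }, U j).Nonempty }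

section Helpers

lemma prime_X_sub_C' {n : ℕ} (i : Fin n) (a : ZMod 2) :
    Prime (X i - C a : MvPolynomial (Fin n) (ZMod 2)) := by
  cases n with
  | zero => exact i.elim0
  | succ m =>
    let e := (renameEquiv (ZMod 2) (Equiv.swap i 0)).trans (finSuccEquiv (ZMod 2) m)
    have key : (X i - C a : MvPolynomial (Fin (m+1)) (ZMod 2)) =
        e.symm (Polynomial.X - Polynomial.C (C a)) := by
      apply e.injective
      rw [AlgEquiv.apply_symm_apply]
      have h1 : e (X i) = Polynomial.X := by
        simp [e, Equiv.swap_apply_left, finSuccEquiv_X_zero]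
      have h2 : e (C a) = Polynomial.C (C a) := by
        simp [e, finSuccEquiv_apply]
      rw [map_sub, h1, h2]
    rw [key]
    exact (MulEquiv.prime_iff e.symm.toMulEquiv).mpr (Polynomial.prime_X_sub_C _)

lemma exists_top_monomial {σ : Type*} {R : Type*} [CommSemiring R] {p : MvPolynomial σ R}
    (hp : p ≠ 0) : ∃ m ∈ p.support, Finsupp.degree m = p.totalDegree := by
  obtain ⟨m, hm, hdeg⟩ := p.support.exists_mem_eq_sup (support_nonempty.mpr hp)
    (fun m => m.sum fun _ e => e)
  exact ⟨m, hm, by rw [totalDegree, hdeg]; rfl⟩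

lemma lowpart_totalDegree_lt {σ : Type*} {R : Type*} [CommRing R] {p : MvPolynomial σ R}
    (h : p - homogeneousComponent p.totalDegree p ≠ 0) :
    (p - homogeneousComponent p.totalDegree p).totalDegree < p.totalDegree := by
  set a := p.totalDegree
  have hmem : ∀ m ∈ (p - homogeneousComponent a p).support, Finsupp.degree m < a := by
    intro m hm
    have hc : coeff m (p - homogeneousComponent a p) ≠ 0 := by
      simpa using mem_support_iff.mp hm
    rw [coeff_sub, coeff_homogeneousComponent] at hc
    by_cases hd : Finsupp.degree m = a
    · simp [hd] at hc
    · rw [if_neg hd, sub_zero] at hc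
      have h1 := le_totalDegree (mem_support_iff.mpr hc)
      have h2 : Finsupp.degree m ≤ a := h1
      omega
  rcases Nat.eq_zero_or_pos a with ha | ha
  · exfalso
    apply h
    rw [← support_eq_empty]
    by_contra hne
    obtain ⟨m, hm⟩ := Finset.nonempty_of_ne_empty hne
    exact absurd (hmem m hm) (by omega)
  · rw [totalDegree]
    apply Finset.sup_lt_iff (by simpa using ha) |>.mpr
    intro m hm
    exact hmem m hm

lemma hcomp_ne_zero_of_ne_zero {σ : Type*} {R : Type*} [CommRing R] {p : MvPolynomial σ R}
    (hp : p ≠ 0) : homogeneousComponent p.totalDegree p ≠ 0 := by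
  obtain ⟨m, hm, hdeg⟩ := exists_top_monomial hp
  intro hz
  have := coeff_homogeneousComponent (n := p.totalDegree) (φ := p) m
  rw [hz] at this
  simp only [coeff_zero, hdeg, if_pos rfl] at this
  exact mem_support_iff.mp hm this.symm

lemma totalDegree_mul_eq' {σ : Type*} {R : Type*} [CommRing R] [IsDomain R]
    {p q : MvPolynomial σ R} (hp : p ≠ 0) (hq : q ≠ 0) :
    (p * q).totalDegree = p.totalDegree + q.totalDegree := by
  refine le_antisymm (totalDegree_mul p q) ?_
  obtain ⟨a, ha⟩ : ∃ a, p.totalDegree = a := ⟨_, rfl⟩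
  obtain ⟨b, hb⟩ : ∃ b, q.totalDegree = b := ⟨_, rfl⟩
  rw [ha, hb]
  have hpa0 : homogeneousComponent a p ≠ 0 := ha ▸ hcomp_ne_zero_of_ne_zero hp
  have hqb0 : homogeneousComponent b q ≠ 0 := hb ▸ hcomp_ne_zero_of_ne_zero hq
  have hPlow : p - homogeneousComponent a p ≠ 0 →
      (p - homogeneousComponent a p).totalDegree < a := by
    intro hz; exact ha ▸ (ha ▸ lowpart_totalDegree_lt (p := p) (ha ▸ hz))
  have hQlow : q - homogeneousComponent b q ≠ 0 →
      (q - homogeneousComponent b q).totalDegree < b := by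
    intro hz; exact hb ▸ (hb ▸ lowpart_totalDegree_lt (p := q) (hb ▸ hz))
  have degpa : (homogeneousComponent a p).totalDegree ≤ a :=
    (homogeneousComponent_isHomogeneous a p).totalDegree_le
  have degqb : (homogeneousComponent b q).totalDegree ≤ b :=
    (homogeneousComponent_isHomogeneous b q).totalDegree_le
  have hP' : ∀ r : MvPolynomial σ R, r.totalDegree < a + b ∨ r = 0 →
      homogeneousComponent (a + b) r = 0 := by
    rintro r (hr | rfl)
    · exact homogeneousComponent_eq_zero _ _ hr
    · exact map_zero _
  have hsplit : p * q = homogeneousComponent a p * homogeneousComponent b q +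
      (homogeneousComponent a p * (q - homogeneousComponent b q) +
      ((p - homogeneousComponent a p) * homogeneousComponent b q +
      (p - homogeneousComponent a p) * (q - homogeneousComponent b q))) := by ring
  have key : homogeneousComponent (a + b) (p * q) =
      homogeneousComponent a p * homogeneousComponent b q := by
    rw [hsplit, map_add, map_add, map_add]
    have e1 : homogeneousComponent (a + b) (homogeneousComponent a p * homogeneousComponent b q)
        = homogeneousComponent a p * homogeneousComponent b q := by
      have hmem : homogeneousComponent a p * homogeneousComponent b q
          ∈ homogeneousSubmodule σ R (a + b) :=
        (homogeneousComponent_isHomogeneous a p).mul (homogeneousComponent_isHomogeneous b q)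
      rw [homogeneousComponent_of_mem hmem, if_pos rfl]
    have e2 : homogeneousComponent (a + b)
        (homogeneousComponent a p * (q - homogeneousComponent b q)) = 0 := by
      apply hP'
      by_cases hz : q - homogeneousComponent b q = 0
      · right; rw [hz, mul_zero]
      · left
        have := totalDegree_mul (homogeneousComponent a p) (q - homogeneousComponent b q)
        have := hQlow hz
        omega
    have e3 : homogeneousComponent (a + b)
        ((p - homogeneousComponent a p) * homogeneousComponent b q) = 0 := by
      apply hP'
      by_cases hz : p - homogeneousComponent a p = 0
      · right; rw [hz, zero_mul]
      · left
        have := totalDegree_mul (p - homogeneousComponent a p) (homogeneousComponent b q)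
        have := hPlow hz
        omega
    have e4 : homogeneousComponent (a + b)
        ((p - homogeneousComponent a p) * (q - homogeneousComponent b q)) = 0 := by
      apply hP'
      by_cases hz : p - homogeneousComponent a p = 0
      · right; rw [hz, zero_mul]
      by_cases hz' : q - homogeneousComponent b q = 0
      · right; rw [hz', mul_zero]
      left
      have := totalDegree_mul (p - homogeneousComponent a p) (q - homogeneousComponent b q)
      have := hPlow hz
      have := hQlow hz'
      omega
    rw [e1, e2, e3, e4]
    ring
  by_contra hlt
  push_neg at hlt
  have := homogeneousComponent_eq_zero (a + b) (p * q) hlt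
  rw [key] at this
  exact mul_ne_zero hpa0 hqb0 this

lemma pm_exists_eval_one {n : ℕ} {h : MvPolynomial (Fin n) (ZMod 2)}
    (hpm : IsPseudoMonomial n h) : ∃ v : Fin n → ZMod 2, eval v h = 1 := by
  obtain ⟨σ, τ, hdisj, rfl⟩ := hpm
  refine ⟨fun k => if k ∈ σ then 1 else 0, ?_⟩
  rw [map_mul, map_prod, map_prod]
  rw [Finset.prod_eq_one, Finset.prod_eq_one, one_mul]
  · intro j hj
    have : j ∉ σ := fun hc => (Finset.disjoint_left.mp hdisj hc) hj
    simp [this]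
  · intro i hi
    simp [hi]

lemma pm_ne_zero {n : ℕ} {h : MvPolynomial (Fin n) (ZMod 2)}
    (hpm : IsPseudoMonomial n h) : h ≠ 0 := by
  obtain ⟨v, hv⟩ := pm_exists_eval_one hpm
  intro hz; rw [hz] at hv; simp at hv

lemma pm_eq_one_of_deg_zero {n : ℕ} {h : MvPolynomial (Fin n) (ZMod 2)}
    (hpm : IsPseudoMonomial n h) (hd : h.totalDegree = 0) : h = 1 := by
  have hC : h = C (coeff 0 h) := by
    ext m
    by_cases hm : m = 0
    · simp [hm]
    · rw [coeff_eq_zero_of_totalDegree_lt, coeff_C, if_neg (Ne.symm hm)]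
      rw [hd]
      have hne : m.support.Nonempty := Finsupp.support_nonempty_iff.mpr hm
      obtain ⟨i, hi⟩ := hne
      have := Finsupp.mem_support_iff.mp hi
      exact Finset.sum_pos' (fun _ _ => Nat.zero_le _) ⟨i, hi, Nat.pos_of_ne_zero this⟩
  obtain ⟨v, hv⟩ := pm_exists_eval_one hpm
  rw [hC] at hv ⊢
  rw [eval_C] at hv
  rw [hv, map_one]

end Helpers

/-- no element of `N` is a multiple of another element of `N`. -/
theorem stmt18 (n : ℕ) (hn : 1 ≤ n) (Co : Set (Fin n → ZMod 2)) (c : Fin n → ZMod 2)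
    (f g : MvPolynomial (Fin n) (ZMod 2))
    (hf : f ∈ CF n (neuralIdeal n Co)) (hg : g ∈ CF n (neuralIdeal n Co))
    (hne : f ≠ g) (hfc : eval c f = 1) (hgc : eval c g = 1) :
    ∀ i j : Fin n, ∀ h : MvPolynomial (Fin n) (ZMod 2), IsPseudoMonomial n h →
      f * (X i - C (c i)) ≠ h * g * (X j - C (c j)) := by
  intro i j h hPM heq
  have hp : Prime (X j - C (c j) : MvPolynomial (Fin n) (ZMod 2)) := prime_X_sub_C' j (c j)
  have hg0 : g ≠ 0 := fun hz => by rw [hz] at hgc; simp at hgc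
  have hpf : ¬ (X j - C (c j) : MvPolynomial (Fin n) (ZMod 2)) ∣ f := by
    rintro ⟨q, rfl⟩
    rw [map_mul, map_sub, eval_X, eval_C, sub_self, zero_mul] at hfc
    exact absurd hfc (by decide)
  have hdvd : (X j - C (c j) : MvPolynomial (Fin n) (ZMod 2)) ∣ f * (X i - C (c i)) :=
    ⟨h * g, by rw [heq]; ring⟩
  have hXi : (X j - C (c j) : MvPolynomial (Fin n) (ZMod 2)) ∣ (X i - C (c i)) :=
    (hp.2.2 _ _ hdvd).resolve_left hpf
  have hij : i = j := by
    by_contra hij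
    obtain ⟨u, hu⟩ := hXi
    have hev := congrArg (eval (Function.update c i (c i + 1))) hu
    rw [map_sub, eval_X, eval_C, Function.update_self, map_mul, map_sub, eval_X, eval_C,
      Function.update_of_ne (fun hc => hij hc.symm), sub_self, zero_mul] at hev
    rw [add_sub_cancel_left] at hev
    exact absurd hev (by decide)
  subst hij
  have hne0 : (X i - C (c i) : MvPolynomial (Fin n) (ZMod 2)) ≠ 0 := hp.ne_zero
  have hcancel : f = h * g := mul_right_cancel₀ hne0 heq
  by_cases h1 : h = 1
  · rw [h1, one_mul] at hcancel
    exact hne hcancel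
  · have hh0 : h ≠ 0 := pm_ne_zero hPM
    have hd : 1 ≤ h.totalDegree :=
      Nat.pos_of_ne_zero (fun hz => h1 (pm_eq_one_of_deg_zero hPM hz))
    exact hf.2.2 ⟨g, hg.2.1, hg.1, by
      rw [hcancel, totalDegree_mul_eq' hh0 hg0]; omega, h, by rw [hcancel]; ring⟩
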